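/- The queer lowering operator is injective where defined (queer axiom B2): for every strict partition γ and every n, if S, T ∈ SSHT_n(γ) satisfy f_0*(S) = f_0*(T) ≠ 0, then S = T. -/

import Mathlib

/-! ## Strict partitions and shifted diagrams (French convention, 1-indexed).

A marked entry `i'` is encoded as `2*i - 1` and an unmarked entry `i` as `2*i`;
the value `0` denotes an empty cell / a cell outside the diagram.  The total
order `1' < 1 < 2' < 2 < ⋯` then coincides with the usual order on `ℕ`. -/

/-- A strict partition: a strictly decreasing list of positive integers. -/
def StrictPartition (γ : List ℕ) : Prop :=
  γ.Chain' (· > ·) ∧ ∀ x ∈ γ, 0 < x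

/-- The `r`-th part (1-indexed) of a partition given as a list. -/
def part (γ : List ℕ) (r : ℕ) : ℕ := γ.getD (r - 1) 0

/-- The cell `(r, c)` (row `r` indexed from the bottom, column `c`, both 1-indexed)
belongs to the shifted diagram of `γ`: row `r` has `γ_r` cells, with its leftmost
cell on the main diagonal `c = r`. -/
def ShiftedShape (γ : List ℕ) (rc : ℕ × ℕ) : Prop :=
  1 ≤ rc.1 ∧ rc.1 ≤ γ.length ∧ rc.1 ≤ rc.2 ∧ rc.2 < rc.1 + part γ rc.1

instance (γ : List ℕ) (rc : ℕ × ℕ) : Decidable (ShiftedShape γ rc) := by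
  unfold ShiftedShape; infer_instance

/-- A common bound for all row and column indices of cells of the (shifted) diagram. -/
def colBound (γ : List ℕ) : ℕ := γ.length + γ.foldr max 0

/-- The cells of the shifted diagram of `γ`, as a finite set. -/
def shapeCells (γ : List ℕ) : Finset (ℕ × ℕ) :=
  (Finset.range (colBound γ + 1) ×ˢ Finset.range (colBound γ + 1)).filter
    (fun rc => ShiftedShape γ rc)

/-- A semistandard shifted tableau of shape `γ` with entries in
`{1' < 1 < 2' < 2 < ⋯ < n' < n}` (encoded as `{1, 2, …, 2n}`): entries weakly
increase along rows (eastward) and columns (northward, i.e. increasing row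
index), with at most one unmarked `i` per column, at most one marked `i'` per
row, and no marked entries on the main diagonal. -/
structure SSHT (n : ℕ) (γ : List ℕ) where
  entry : ℕ × ℕ → ℕ
  zero_outside : ∀ rc, ¬ ShiftedShape γ rc → entry rc = 0
  pos : ∀ rc, ShiftedShape γ rc → 1 ≤ entry rc
  le_two_n : ∀ rc, ShiftedShape γ rc → entry rc ≤ 2 * n
  row_mono : ∀ r c c', c < c' → ShiftedShape γ (r, c) → ShiftedShape γ (r, c') →
    entry (r, c) ≤ entry (r, c')
  col_mono : ∀ r r' c, r < r' → ShiftedShape γ (r, c) → ShiftedShape γ (r', c) →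
    entry (r, c) ≤ entry (r', c)
  col_unmarked : ∀ r r' c, r < r' → ShiftedShape γ (r, c) → ShiftedShape γ (r', c) →
    entry (r, c) = entry (r', c) → entry (r, c) % 2 = 1
  row_marked : ∀ r c c', c < c' → ShiftedShape γ (r, c) → ShiftedShape γ (r, c') →
    entry (r, c) = entry (r, c') → entry (r, c) % 2 = 0
  diag_unmarked : ∀ r, ShiftedShape γ (r, r) → entry (r, r) % 2 = 0

/-- The weight of a filling of the shifted diagram of `γ`: `wtFun γ f k` is the
number of cells whose entry equals `k` or `k'` (encoded `2k` or `2k-1`). -/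
def wtFun (γ : List ℕ) (f : ℕ × ℕ → ℕ) (k : ℕ) : ℕ :=
  ((shapeCells γ).filter (fun rc => f rc = 2 * k - 1 ∨ f rc = 2 * k)).card

/-! ## The queer lowering operator `f_0*`. -/

/-- The cell of the rightmost unmarked entry `1` (encoded `2`) of `T`, if any. -/
def rightmostOne {n : ℕ} {γ : List ℕ} (T : SSHT n γ) : Option (ℕ × ℕ) :=
  (((List.range (colBound γ + 1)).flatMap (fun r =>
      (List.range (colBound γ + 1)).map (fun c => (r, c)))).filter
    (fun rc => decide (ShiftedShape γ rc) && decide (T.entry rc = 2))).foldr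
    (fun a b => match b with
      | none => some a
      | some b' => if b'.2 ≤ a.2 then some a else some b') none

/-- The queer lowering operator `f_0*`, described on underlying fillings:
`queerLowerFun T = none` when `f_0*(T) = 0` (no entry `1`, or some entry `2'`);
otherwise the rightmost `1` becomes `2'` off the main diagonal and `2` on it. -/
def queerLowerFun {n : ℕ} {γ : List ℕ} (T : SSHT n γ) : Option (ℕ × ℕ → ℕ) :=
  if ∃ rc ∈ shapeCells γ, T.entry rc = 3 then none
  else
    match rightmostOne T with
    | none => none
    | some (r, c) =>
      some (fun rc => if rc = (r, c) then (if r = c then 4 else 3) else T.entry rc)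

/-! ## Auxiliary lemmas -/

private lemma foldr_choose_mem (l : List (ℕ × ℕ)) (a : ℕ × ℕ)
    (h : l.foldr (fun a b => match b with
      | none => some a
      | some b' => if b'.2 ≤ a.2 then some a else some b') none = some a) : a ∈ l := by
  induction l with
  | nil => simp at h
  | cons x xs ih =>
    simp only [List.foldr_cons] at h
    cases hfold : xs.foldr (fun a b => match b with
      | none => some a
      | some b' => if b'.2 ≤ a.2 then some a else some b') none with
    | none =>
      rw [hfold] at h
      simp only at h
      cases h; exact List.mem_cons_self
    | some b' =>
      rw [hfold] at h
      simp only at h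
      split at h
      · cases h; exact List.mem_cons_self
      · cases h; exact List.mem_cons_of_mem _ (ih hfold)

private lemma rightmostOne_spec {n : ℕ} {γ : List ℕ} (T : SSHT n γ) (rc : ℕ × ℕ)
    (h : rightmostOne T = some rc) : ShiftedShape γ rc ∧ T.entry rc = 2 := by
  unfold rightmostOne at h
  have hm := foldr_choose_mem _ _ h
  rw [List.mem_filter] at hm
  have := hm.2
  simp only [Bool.and_eq_true, decide_eq_true_eq] at this
  exact this

private lemma le_foldr_max (l : List ℕ) : ∀ x ∈ l, x ≤ l.foldr max 0 := by
  induction l with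
  | nil => simp
  | cons a t ih =>
    intro x hx
    rcases List.mem_cons.mp hx with rfl | hx
    · exact le_max_left _ _
    · exact le_trans (ih x hx) (le_max_right _ _)

private lemma mem_shapeCells {γ : List ℕ} {rc : ℕ × ℕ} (h : ShiftedShape γ rc) :
    rc ∈ shapeCells γ := by
  obtain ⟨h1, h2, h3, h4⟩ := h
  have hpart : part γ rc.1 ≤ γ.foldr max 0 := by
    have hlt : rc.1 - 1 < γ.length := by omega
    have : part γ rc.1 = γ.get ⟨rc.1 - 1, hlt⟩ := by
      simp [part, List.getD_eq_getElem?_getD, List.getElem?_eq_getElem hlt]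
    rw [this]
    exact le_foldr_max γ _ (List.get_mem γ _)
  have hr : rc.1 < colBound γ + 1 := by unfold colBound; omega
  have hc : rc.2 < colBound γ + 1 := by unfold colBound; omega
  refine Finset.mem_filter.mpr ⟨Finset.mem_product.mpr ⟨?_, ?_⟩, ⟨h1, h2, h3, h4⟩⟩
  · exact Finset.mem_range.mpr hr
  · exact Finset.mem_range.mpr hc

private lemma chain'_get_le (l : List ℕ) (hl : l.Chain' (· > ·)) :
    ∀ (d i : ℕ) (h : i + d < l.length),
      l.get ⟨i + d, h⟩ + d ≤ l.get ⟨i, by omega⟩ := by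
  intro d
  induction d with
  | zero => intro i h; simp
  | succ d ih =>
    intro i h
    have h1 : i + d < l.length - 1 := by omega
    have h2 := (List.isChain_iff_getElem.mp hl) (i + d) (by omega)
    have h3 := ih i (by omega)
    simp only [gt_iff_lt] at h2
    have h4 : l.get ⟨i + (d + 1), h⟩ < l.get ⟨i + d, by omega⟩ := by
      convert h2 using 2 <;> simp [Nat.add_assoc]
    omega

private lemma part_ge {γ : List ℕ} (hγ : StrictPartition γ) {r r' : ℕ}
    (h1 : 1 ≤ r) (hrr : r ≤ r') (hr' : r' ≤ γ.length) :
    part γ r' + (r' - r) ≤ part γ r := by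
  have hlt' : r' - 1 < γ.length := by omega
  have hlt : r - 1 < γ.length := by omega
  have e' : part γ r' = γ.get ⟨r' - 1, hlt'⟩ := by
    simp [part, List.getD_eq_getElem?_getD, List.getElem?_eq_getElem hlt']
  have e : part γ r = γ.get ⟨r - 1, hlt⟩ := by
    simp [part, List.getD_eq_getElem?_getD, List.getElem?_eq_getElem hlt]
  have key := chain'_get_le γ hγ.1 (r' - r) (r - 1) (by omega)
  rw [e, e']
  have e2 : (⟨r' - 1, hlt'⟩ : Fin γ.length) = ⟨r - 1 + (r' - r), by omega⟩ := by
    apply Fin.ext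
    show r' - 1 = r - 1 + (r' - r)
    omega
  rw [e2]
  exact key

private lemma SSHT.ext' {n : ℕ} {γ : List ℕ} {S T : SSHT n γ}
    (h : S.entry = T.entry) : S = T := by
  cases S; cases T; cases h; rfl

/-- (Queer axiom B2.) The queer lowering operator is injective
where defined: if `f_0*(S) = f_0*(T) ≠ 0` then `S = T`. -/
theorem queerLower_injective (n : ℕ) (γ : List ℕ) (hγ : StrictPartition γ)
    (S T : SSHT n γ) (h : queerLowerFun S = queerLowerFun T)
    (hne : queerLowerFun T ≠ none) : S = T := by
  unfold queerLowerFun at h hne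
  by_cases hT3 : ∃ rc ∈ shapeCells γ, T.entry rc = 3
  · simp [hT3] at hne
  by_cases hS3 : ∃ rc ∈ shapeCells γ, S.entry rc = 3
  · rw [if_pos hS3] at h; rw [if_neg hT3] at h hne
    exact absurd h.symm hne
  rw [if_neg hS3] at h; rw [if_neg hT3] at h hne
  cases hRT : rightmostOne T with
  | none => rw [hRT] at hne; simp at hne
  | some rcT =>
    cases hRS : rightmostOne S with
    | none =>
      rw [hRS, hRT] at h
      obtain ⟨r', c'⟩ := rcT
      simp at h
    | some rcS =>
      obtain ⟨rS2, hS2⟩ := rightmostOne_spec S rcS hRS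
      obtain ⟨rT2, hT2⟩ := rightmostOne_spec T rcT hRT
      obtain ⟨r, c⟩ := rcS
      obtain ⟨r', c'⟩ := rcT
      rw [hRS, hRT] at h
      simp only [Option.some.injEq] at h
      by_cases hcc : ((r : ℕ), (c : ℕ)) = (r', c')
      · -- same changed cell: entries agree everywhere
        refine SSHT.ext' ?_
        funext rc
        by_cases hrc : rc = (r, c)
        · rw [hrc, hS2, hcc, hT2]
        · have := congrFun h rc
          rw [if_neg hrc, if_neg (fun he => hrc (he.trans hcc.symm))] at this
          exact this
      · exfalso
        by_cases hd' : r' = c'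
        · by_cases hd : r = c
          · subst hd; subst hd'
            have hrr' : r ≠ r' := fun he => hcc (by rw [he])
            have hSrr : S.entry (r', r') = 4 := by
              have := congrFun h (r', r')
              rw [if_neg (fun he => hcc he.symm), if_pos rfl, if_pos rfl] at this
              exact this
            have hTrr : T.entry (r, r) = 4 := by
              have := congrFun h (r, r)
              rw [if_pos rfl, if_pos rfl, if_neg hcc] at this
              exact this.symm
            have aS : 1 ≤ r ∧ r ≤ γ.length ∧ r ≤ r ∧ r < r + part γ r := rS2
            have aT : 1 ≤ r' ∧ r' ≤ γ.length ∧ r' ≤ r' ∧ r' < r' + part γ r' := rT2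
            obtain ⟨a1, a2, -, a4⟩ := aS
            obtain ⟨b1, b2, -, b4⟩ := aT
            rcases lt_or_gt_of_ne hrr' with hlt | hlt
            · -- r < r' : contradiction inside T
              have hpg := part_ge hγ a1 (le_of_lt hlt) b2
              have hmid : ShiftedShape γ (r, r') :=
                ⟨a1, a2, le_of_lt hlt, by show r' < r + part γ r; omega⟩
              have h1 := T.row_mono r r r' hlt rS2 hmid
              have h2 := T.col_mono r r' r' hlt hmid rT2
              omega
            · -- r' < r : contradiction inside S
              have hpg := part_ge hγ b1 (le_of_lt hlt) a2
              have hmid : ShiftedShape γ (r', r) :=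
                ⟨b1, b2, le_of_lt hlt, by show r < r' + part γ r'; omega⟩
              have h1 := S.row_mono r' r' r hlt rT2 hmid
              have h2 := S.col_mono r' r r hlt hmid rS2
              omega
          · -- S's change off diagonal while T's on diagonal: impossible
            have hTrc : T.entry (r, c) = 3 := by
              have := congrFun h (r, c)
              rw [if_pos rfl, if_neg hd, if_neg hcc] at this
              exact this.symm
            exact hT3 ⟨(r, c), mem_shapeCells rS2, hTrc⟩
        · -- T's change off diagonal
          have hSrc : S.entry (r', c') = 3 := by
            have := congrFun h (r', c')
            rw [if_neg (fun he => hcc he.symm), if_pos rfl, if_neg hd'] at this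
            exact this
          exact hS3 ⟨(r', c'), mem_shapeCells rT2, hSrc⟩
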